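/- Let q ≥ 1 be a real number and let μ be a finite Borel measure on ℝ whose support is contained in [-(q+1), q+1]. Then the function F(u) = ∫ log(1 - λu + qu²) dμ(λ), where log denotes the principal branch of the complex logarithm, is well defined and holomorphic on Ω. -/

import Mathlib

open MeasureTheory

/-- The interior `Ω` of the region `C`: `|u| < q^(-1/2)`, and if `u` is real
then `|u| < 1/q`. -/
def Omega (q : ℝ) : Set ℂ :=
  {u : ℂ | ‖u‖ < (Real.sqrt q)⁻¹ ∧ (u.im = 0 → |u.re| < 1 / q)}

lemma slit_aux {q : ℝ} (hq : 1 ≤ q) {u : ℂ} (hu : u ∈ Omega q) {lam : ℝ}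
    (hlam : lam ∈ Set.Icc (-(q + 1)) (q + 1)) :
    (1 - (lam : ℂ) * u + (q : ℂ) * u ^ 2) ∈ Complex.slitPlane := by
  obtain ⟨habs, hre⟩ := hu
  obtain ⟨hl1, hl2⟩ := hlam
  have hq0 : (0:ℝ) < q := by linarith
  have hxy : u.re ^ 2 + u.im ^ 2 < 1 / q := by
    have h1 : (‖u‖) ^ 2 < ((Real.sqrt q)⁻¹) ^ 2 :=
      pow_lt_pow_left₀ habs (norm_nonneg u) two_ne_zero
    have h2 : ((Real.sqrt q)⁻¹) ^ 2 = 1 / q := by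
      rw [inv_pow, Real.sq_sqrt hq0.le]; ring
    have h3 : (‖u‖) ^ 2 = u.re ^ 2 + u.im ^ 2 := by
      rw [Complex.sq_norm, Complex.normSq_apply]; ring
    linarith
  have hRe : (1 - (lam : ℂ) * u + (q : ℂ) * u ^ 2).re
      = 1 - lam * u.re + q * (u.re ^ 2 - u.im ^ 2) := by
    simp [pow_two, Complex.add_re, Complex.sub_re, Complex.mul_re, Complex.mul_im,
      Complex.ofReal_re, Complex.ofReal_im]
  have hIm : (1 - (lam : ℂ) * u + (q : ℂ) * u ^ 2).im
      = u.im * (2 * q * u.re - lam) := by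
    simp [pow_two, Complex.add_im, Complex.sub_im, Complex.mul_re, Complex.mul_im,
      Complex.ofReal_re, Complex.ofReal_im]
    ring_nf
  rw [Complex.mem_slitPlane_iff, hRe, hIm]
  by_cases hy : u.im = 0
  · left
    rw [hy]
    have hx : |u.re| < 1 / q := hre hy
    have hx1 : u.re < 1 / q := (abs_lt.1 hx).2
    have hx2 : -(1 / q) < u.re := (abs_lt.1 hx).1
    have hq1 : 1 / q ≤ 1 := by
      rw [div_le_one hq0]; linarith
    rcases le_or_gt 0 u.re with hxs | hxs
    · have h1 : (0:ℝ) < 1 - u.re := by linarith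
      have h2 : (0:ℝ) < 1 - q * u.re := by
        have : q * u.re < 1 := by
          calc q * u.re < q * (1 / q) := by
                rcases eq_or_lt_of_le hxs with h | h
                · rw [← h]; simp; positivity
                · exact (mul_lt_mul_iff_right₀ hq0).2 hx1
            _ = 1 := by field_simp
        linarith
      nlinarith [mul_pos h1 h2, mul_nonneg (by linarith : (0:ℝ) ≤ q + 1 - lam) hxs]
    · have h3 : (0:ℝ) < 1 + u.re := by linarith
      have h4 : (0:ℝ) < 1 + q * u.re := by
        have : -(1:ℝ) < q * u.re := by
          have : q * (-(1/q)) < q * u.re := (mul_lt_mul_iff_right₀ hq0).2 hx2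
          have hqq : q * (-(1/q)) = -1 := by field_simp
          linarith
        linarith
      nlinarith [mul_pos h3 h4,
        mul_nonneg (by linarith : (0:ℝ) ≤ q + 1 + lam) (by linarith : (0:ℝ) ≤ -u.re)]
  · by_cases h2 : 2 * q * u.re - lam = 0
    · left
      have hlameq : lam = 2 * q * u.re := by linarith
      have hq' : (u.re ^ 2 + u.im ^ 2) * q < 1 := by
        have := (mul_lt_mul_iff_left₀ hq0).2 hxy
        have hqq : 1 / q * q = 1 := by field_simp
        linarith
      rw [hlameq]; nlinarith
    · right
      exact mul_ne_zero hy h2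

lemma omega_open (q : ℝ) : IsOpen (Omega q) := by
  have h1 : IsOpen {u : ℂ | ‖u‖ < (Real.sqrt q)⁻¹} :=
    isOpen_lt continuous_norm continuous_const
  have h2 : IsOpen ({u : ℂ | u.im ≠ 0} ∪ {u : ℂ | |u.re| < 1 / q}) := by
    apply IsOpen.union
    · exact isOpen_ne.preimage Complex.continuous_im
    · exact isOpen_lt (continuous_abs.comp Complex.continuous_re) continuous_const
  have heq : Omega q = {u : ℂ | ‖u‖ < (Real.sqrt q)⁻¹} ∩
      ({u : ℂ | u.im ≠ 0} ∪ {u : ℂ | |u.re| < 1 / q}) := by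
    ext u
    simp only [Omega, Set.mem_setOf_eq, Set.mem_inter_iff, Set.mem_union]
    constructor
    · rintro ⟨ha, hb⟩
      refine ⟨ha, ?_⟩
      by_cases him : u.im = 0
      · exact Or.inr (hb him)
      · exact Or.inl him
    · rintro ⟨ha, hb | hb⟩
      · exact ⟨ha, fun h => absurd h hb⟩
      · exact ⟨ha, fun _ => hb⟩
  rw [heq]; exact h1.inter h2

/-- For a finite Borel measure `μ` supported in `[-(q + 1), q + 1]`, the function
`F(u) = ∫ log(1 - λu + qu²) dμ(λ)` is well defined (the integrand is
integrable) and holomorphic on `Ω`. -/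
theorem log_integral_holomorphic (q : ℝ) (hq : 1 ≤ q)
    (μ : Measure ℝ) [IsFiniteMeasure μ]
    (hsupp : μ (Set.Icc (-(q + 1)) (q + 1))ᶜ = 0) :
    (∀ u ∈ Omega q,
        Integrable (fun lam : ℝ =>
          Complex.log (1 - (lam : ℂ) * u + (q : ℂ) * u ^ 2)) μ) ∧
      DifferentiableOn ℂ
        (fun u : ℂ =>
          ∫ lam : ℝ, Complex.log (1 - (lam : ℂ) * u + (q : ℂ) * u ^ 2) ∂μ)
        (Omega q) := by
  set I : Set ℝ := Set.Icc (-(q + 1)) (q + 1) with hI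
  have haeI : ∀ᵐ lam ∂μ, lam ∈ I := by
    rw [ae_iff]
    exact hsupp
  -- continuity of the inner polynomial map, jointly
  have hWcont : Continuous (fun p : ℂ × ℝ =>
      1 - (p.2 : ℂ) * p.1 + (q : ℂ) * p.1 ^ 2) :=
    (continuous_const.sub
        (((Complex.continuous_ofReal.comp continuous_snd)).mul continuous_fst)).add
      (continuous_const.mul ((continuous_pow 2).comp continuous_fst))
  have hmeas : ∀ u : ℂ, Measurable (fun lam : ℝ =>
      Complex.log (1 - (lam : ℂ) * u + (q : ℂ) * u ^ 2)) := by
    intro u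
    exact Complex.measurable_log.comp
      (hWcont.comp (continuous_const.prodMk continuous_id)).measurable
  have hInt : ∀ u ∈ Omega q,
      Integrable (fun lam : ℝ =>
        Complex.log (1 - (lam : ℂ) * u + (q : ℂ) * u ^ 2)) μ := by
    intro u hu
    have hc : ContinuousOn (fun lam : ℝ =>
        Complex.log (1 - (lam : ℂ) * u + (q : ℂ) * u ^ 2)) I := by
      intro lam hl
      have hwc : Continuous (fun lam : ℝ => 1 - (lam : ℂ) * u + (q : ℂ) * u ^ 2) :=
        hWcont.comp (continuous_const.prodMk continuous_id)
      have := ContinuousAt.comp_continuousWithinAt (x := lam) (s := I)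
        (g := Complex.log)
        (f := fun lam : ℝ => 1 - (lam : ℂ) * u + (q : ℂ) * u ^ 2)
        (continuousAt_clog (slit_aux hq hu hl)) hwc.continuousWithinAt
      exact this
    obtain ⟨C, hC⟩ := isCompact_Icc.exists_bound_of_continuousOn hc
    refine ⟨(hmeas u).aestronglyMeasurable, HasFiniteIntegral.of_bounded (C := C) ?_⟩
    filter_upwards [haeI] with lam hl
    exact hC lam hl
  refine ⟨hInt, ?_⟩
  intro u₀ hu₀
  obtain ⟨ε, hε, hball⟩ := Metric.isOpen_iff.1 (omega_open q) u₀ hu₀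
  have hε2 : 0 < ε / 2 := by linarith
  have hcb : Metric.closedBall u₀ (ε / 2) ⊆ Omega q := by
    refine Set.Subset.trans ?_ hball
    exact Metric.closedBall_subset_ball (by linarith)
  -- the derivative function
  set F' : ℂ → ℝ → ℂ := fun u lam =>
    (2 * (q : ℂ) * u - (lam : ℂ)) / (1 - (lam : ℂ) * u + (q : ℂ) * u ^ 2) with hF'
  have hGcont : ContinuousOn (fun p : ℂ × ℝ => F' p.1 p.2)
      (Metric.closedBall u₀ (ε / 2) ×ˢ I) := by
    apply ContinuousOn.div
    · exact ((continuous_const.mul continuous_fst).sub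
        (Complex.continuous_ofReal.comp continuous_snd)).continuousOn
    · exact hWcont.continuousOn
    · rintro ⟨u, lam⟩ ⟨hu, hl⟩
      exact Complex.slitPlane_ne_zero (slit_aux hq (hcb hu) hl)
  obtain ⟨C, hC⟩ := ((isCompact_closedBall u₀ (ε / 2)).prod
    isCompact_Icc).exists_bound_of_continuousOn hGcont
  have key := hasDerivAt_integral_of_dominated_loc_of_deriv_le (μ := μ)
    (F := fun u lam => Complex.log (1 - (lam : ℂ) * u + (q : ℂ) * u ^ 2))
    (F' := F') (x₀ := u₀) (bound := fun _ => C) (Metric.ball_mem_nhds u₀ hε2)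
    (Filter.Eventually.of_forall fun u => (hmeas u).aestronglyMeasurable)
    (hInt u₀ hu₀)
    ?_ ?_ (integrable_const C) ?_
  · exact key.2.differentiableAt.differentiableWithinAt
  · -- measurability of F' u₀
    have hnum : Continuous fun lam : ℝ => 2 * (q : ℂ) * u₀ - (lam : ℂ) :=
      continuous_const.sub Complex.continuous_ofReal
    have hden : Continuous fun lam : ℝ =>
        1 - (lam : ℂ) * u₀ + (q : ℂ) * u₀ ^ 2 := by
      have := hWcont.comp
        ((continuous_const : Continuous fun _ : ℝ => u₀).prodMk continuous_id)
      exact this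
    exact (hnum.measurable.div hden.measurable).aestronglyMeasurable
  · -- bound
    filter_upwards [haeI] with lam hl
    intro u hu
    exact hC (u, lam) ⟨Metric.ball_subset_closedBall hu, hl⟩
  · -- differentiability
    filter_upwards [haeI] with lam hl
    intro u hu
    have huΩ : u ∈ Omega q := hcb (Metric.ball_subset_closedBall hu)
    have hinner : HasDerivAt (fun u : ℂ => 1 - (lam : ℂ) * u + (q : ℂ) * u ^ 2)
        (2 * (q : ℂ) * u - (lam : ℂ)) u := by
      have d1 : HasDerivAt (fun u : ℂ => (q : ℂ) * u ^ 2) ((q : ℂ) * (2 * u)) u := by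
        simpa using (hasDerivAt_pow 2 u).const_mul (q : ℂ)
      have d2 : HasDerivAt (fun u : ℂ => (lam : ℂ) * u) (lam : ℂ) u := by
        simpa using (hasDerivAt_id u).const_mul (lam : ℂ)
      have := ((hasDerivAt_const u (1 : ℂ)).sub d2).add d1
      exact this.congr_deriv (by ring)
    exact hinner.clog (slit_aux hq huΩ hl)
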